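/- Let f : V → ℝ ∪ {+∞} be a closed proper convex function on a finite-dimensional real vector space V. Then f** = f, where f** is the Legendre transform of the Legendre transform f*, computed via the canonical identification V** ≅ V. -/

import Mathlib

open NormedSpace

/-- The epigraph of an `EReal`-valued function. -/
def epigraph {V : Type*} (f : V → EReal) : Set (V × ℝ) :=
  {p | f p.1 ≤ (p.2 : EReal)}

/-- A function `f : V → ℝ ∪ {+∞}` (never `-∞`) is closed proper convex if its
epigraph is closed, convex and nonempty. -/
def ClosedProperConvexOn {V : Type*} [NormedAddCommGroup V] [NormedSpace ℝ V]
    (f : V → EReal) : Prop :=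
  (∀ x, f x ≠ ⊥) ∧ IsClosed (epigraph f) ∧ Convex ℝ (epigraph f) ∧
    (epigraph f).Nonempty

/-- The Legendre (Fenchel) transform `f*(y) = sup_{x ∈ dom f} (⟨x,y⟩ - f x)`. -/
noncomputable def legendre {V : Type*} [NormedAddCommGroup V] [NormedSpace ℝ V]
    (f : V → EReal) (y : StrongDual ℝ V) : EReal :=
  ⨆ x : {x : V // f x ≠ ⊤}, ((y x.1 : EReal) - f x.1)

section Aux
variable {V : Type*} [NormedAddCommGroup V] [NormedSpace ℝ V]

lemma term_eq (f : V → EReal) (hbot : ∀ z, f z ≠ ⊥) (y : StrongDual ℝ V) {z : V} (hz : f z ≠ ⊤) :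
    (y z : EReal) - f z = ((y z - (f z).toReal : ℝ) : EReal) := by
  rw [EReal.coe_sub, EReal.coe_toReal hz (hbot z)]

lemma le_legendre (f : V → EReal) (hbot : ∀ z, f z ≠ ⊥) (y : StrongDual ℝ V) {z : V}
    (hz : f z ≠ ⊤) : ((y z - (f z).toReal : ℝ) : EReal) ≤ legendre f y := by
  rw [← term_eq f hbot y hz]
  exact le_iSup (fun x : {x : V // f x ≠ ⊤} => ((y x.1 : EReal) - f x.1)) ⟨z, hz⟩

lemma legendre_le_iff (f : V → EReal) (hbot : ∀ z, f z ≠ ⊥) (y : StrongDual ℝ V) (c : ℝ) :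
    legendre f y ≤ (c : EReal) ↔ ∀ z, f z ≠ ⊤ → y z - (f z).toReal ≤ c := by
  rw [legendre, iSup_le_iff]
  constructor
  · intro h z hz
    have := h ⟨z, hz⟩
    rw [term_eq f hbot y hz] at this
    exact EReal.coe_le_coe_iff.1 this
  · intro h z
    rw [term_eq f hbot y z.2]
    exact EReal.coe_le_coe_iff.2 (h z.1 z.2)

lemma phi_decomp (φ : (V × ℝ) →L[ℝ] ℝ) (z : V) (t : ℝ) :
    φ (z, t) = φ.comp (ContinuousLinearMap.inl ℝ V ℝ) z + t * φ (0, 1) := by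
  have h : (z, t) = (z, (0:ℝ)) + t • ((0:V), (1:ℝ)) := by
    simp [Prod.ext_iff]
  rw [h, map_add, map_smul]
  rfl

lemma sep (f : V → EReal) [FiniteDimensional ℝ V] (hf : ClosedProperConvexOn f)
    {x : V} {r : ℝ} (hxr : (x, r) ∉ epigraph f) :
    ∃ (y : StrongDual ℝ V) (s u : ℝ), s ≤ 0 ∧
      (∀ (z : V) (t : ℝ), f z ≤ (t : EReal) → y z + s * t < u) ∧ u < y x + s * r := by
  obtain ⟨hbot, hcl, hcv, hne⟩ := hf
  obtain ⟨φ, u, hsep, hgt⟩ := geometric_hahn_banach_closed_point hcv hcl hxr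
  set y : StrongDual ℝ V := φ.comp (ContinuousLinearMap.inl ℝ V ℝ) with hy
  set s : ℝ := φ (0, 1) with hs
  have hφ : ∀ (z : V) (t : ℝ), φ (z, t) = y z + t * s := fun z t => phi_decomp φ z t
  have hsep' : ∀ (z : V) (t : ℝ), f z ≤ (t : EReal) → y z + s * t < u := by
    intro z t hzt
    have := hsep (z, t) hzt
    rw [hφ] at this; linarith
  refine ⟨y, s, u, ?_, hsep', by have := hgt; rw [hφ] at this; linarith⟩
  by_contra hs0
  push_neg at hs0
  obtain ⟨⟨z₀, t₀⟩, hz₀⟩ := hne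
  have ht' : f z₀ ≤ ((max t₀ ((u - y z₀)/s) : ℝ) : EReal) :=
    le_trans hz₀ (EReal.coe_le_coe_iff.2 (le_max_left _ _))
  have h1 := hsep' z₀ _ ht'
  have h2 : s * ((u - y z₀)/s) ≤ s * max t₀ ((u - y z₀)/s) :=
    mul_le_mul_of_nonneg_left (le_max_right _ _) hs0.le
  rw [mul_div_cancel₀ _ (ne_of_gt hs0)] at h2
  linarith

lemma div_trick {s u yz t : ℝ} (hslt : s < 0) (h1 : yz + s * t < u) :
    (-s)⁻¹ * yz - t ≤ -u/s := by
  have hns : (0:ℝ) < -s := by linarith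
  have hapos : (0:ℝ) < (-s)⁻¹ := inv_pos.mpr hns
  have h3 := mul_lt_mul_of_pos_left h1 hapos
  have hs' : s ≠ 0 := ne_of_lt hslt
  have h5 : -u/s = (-s)⁻¹ * u := by rw [neg_div, inv_neg, neg_mul, inv_mul_eq_div]
  have h6 : (-s)⁻¹ * (yz + s * t) = (-s)⁻¹ * yz - t := by
    have hst : (-s)⁻¹ * (s * t) = -t := by rw [inv_neg, neg_mul, inv_mul_cancel_left₀ hs']
    rw [mul_add, hst]; ring
  rw [h5]
  rw [h6] at h3
  linarith

lemma exists_finite (f : V → EReal) [FiniteDimensional ℝ V] (hf : ClosedProperConvexOn f) :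
    ∃ (ψ : StrongDual ℝ V) (c : ℝ), legendre f ψ ≤ (c : EReal) := by
  obtain ⟨hbot, hcl, hcv, ⟨⟨z₀, t₀⟩, hz₀⟩⟩ := hf
  have hz₀top : f z₀ ≠ ⊤ := fun h => by simp [epigraph, h] at hz₀
  set r : ℝ := (f z₀).toReal - 1 with hr
  have hxr : (z₀, r) ∉ epigraph f := by
    intro h
    have : f z₀ ≤ (r : EReal) := h
    rw [← EReal.coe_toReal hz₀top (hbot z₀), EReal.coe_le_coe_iff] at this
    simp only [hr] at this; linarith
  obtain ⟨y, s, u, hsle, hsep', hgt⟩ := sep f ⟨hbot, hcl, hcv, ⟨(z₀, t₀), hz₀⟩⟩ hxr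
  have hslt : s < 0 := by
    rcases lt_or_eq_of_le hsle with h | h
    · exact h
    · exfalso
      have h1 := hsep' z₀ ((f z₀).toReal)
        (by rw [EReal.coe_toReal hz₀top (hbot z₀)])
      subst h
      simp only [zero_mul, add_zero] at h1 hgt; linarith
  refine ⟨(-s)⁻¹ • y, -u/s, ?_⟩
  rw [legendre_le_iff f hbot]
  intro z hz
  have h1 := hsep' z ((f z).toReal) (by rw [EReal.coe_toReal hz (hbot z)])
  simpa using div_trick hslt h1

/-- key: a point strictly below the graph is below the bidual. -/
lemma key (f : V → EReal) [FiniteDimensional ℝ V] (hf : ClosedProperConvexOn f)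
    (x : V) (r : ℝ) (hxr : (x, r) ∉ epigraph f) :
    (r : EReal) < legendre (legendre f) (inclusionInDoubleDual ℝ V x) := by
  have hbot := hf.1
  -- the Legendre transform is never ⊥ and never ⊥-valued facts
  obtain ⟨y, s, u, hsle, hsep', hgt⟩ := sep f hf hxr
  have hgbot : ∀ ψ : StrongDual ℝ V, legendre f ψ ≠ ⊥ := by
    intro ψ hψ
    obtain ⟨⟨z₀, t₀⟩, hz₀⟩ := hf.2.2.2
    have hz₀top : f z₀ ≠ ⊤ := fun h => by simp [epigraph, h] at hz₀
    have := le_legendre f hbot ψ hz₀top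
    rw [hψ] at this
    exact (EReal.bot_lt_coe _).not_ge this
  -- helper: from a finite value of legendre f at ψ, get a lower bound on bidual
  have hlow : ∀ (ψ : StrongDual ℝ V) (c : ℝ), legendre f ψ ≤ (c : EReal) →
      ((ψ x - c : ℝ) : EReal) ≤ legendre (legendre f) (inclusionInDoubleDual ℝ V x) := by
    intro ψ c hc
    have hψtop : legendre f ψ ≠ ⊤ := fun h => by
      rw [h] at hc; exact (EReal.coe_lt_top c).not_ge hc
    have hcr : (legendre f ψ).toReal ≤ c := by
      rw [← EReal.coe_le_coe_iff, EReal.coe_toReal hψtop (hgbot ψ)]; exact hc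
    have step := le_legendre (legendre f) hgbot (inclusionInDoubleDual ℝ V x) hψtop
    refine le_trans ?_ step
    rw [EReal.coe_le_coe_iff, dual_def]
    linarith
  rcases lt_or_eq_of_le hsle with hslt | hs0
  · -- s < 0 case
    have hc : legendre f ((-s)⁻¹ • y) ≤ ((-u/s : ℝ) : EReal) := by
      rw [legendre_le_iff f hbot]
      intro z hz
      have h1 := hsep' z ((f z).toReal) (by rw [EReal.coe_toReal hz (hbot z)])
      simpa using div_trick hslt h1
    have := hlow _ _ hc
    refine lt_of_lt_of_le ?_ this
    rw [EReal.coe_lt_coe_iff]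
    -- r < (-s)⁻¹ • y x - (-u/s)
    have hns : (0:ℝ) < -s := by linarith
    have hapos : (0:ℝ) < (-s)⁻¹ := inv_pos.mpr hns
    simp only [ContinuousLinearMap.smul_apply, smul_eq_mul]
    -- from u < y x + s * r
    have h3 := mul_lt_mul_of_pos_left hgt hapos
    have hs' : s ≠ 0 := ne_of_lt hslt
    have h6 : (-s)⁻¹ * (y x + s * r) = (-s)⁻¹ * y x - r := by
      have hst : (-s)⁻¹ * (s * r) = -r := by rw [inv_neg, neg_mul, inv_mul_cancel_left₀ hs']
      rw [mul_add, hst]; ring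
    have h5 : -u/s = (-s)⁻¹ * u := by rw [neg_div, inv_neg, neg_mul, inv_mul_eq_div]
    rw [h6] at h3
    rw [h5]
    linarith
  · -- s = 0 case
    subst hs0
    simp only [zero_mul, add_zero] at hsep' hgt
    obtain ⟨ψ₀, c₀, hψ₀⟩ := exists_finite f hf
    -- choose λ
    set l : ℝ := max 0 ((r - ψ₀ x + c₀ + 1)/(y x - u)) with hl
    have hyxu : 0 < y x - u := by linarith
    have hlnn : 0 ≤ l := le_max_left _ _
    have hc : legendre f (ψ₀ + l • y) ≤ ((c₀ + l * u : ℝ) : EReal) := by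
      rw [legendre_le_iff f hbot]
      intro z hz
      have h1 : ψ₀ z - (f z).toReal ≤ c₀ :=
        (legendre_le_iff f hbot ψ₀ c₀).1 hψ₀ z hz
      have h2 := hsep' z ((f z).toReal) (by rw [EReal.coe_toReal hz (hbot z)])
      have h3 : l * y z ≤ l * u := mul_le_mul_of_nonneg_left h2.le hlnn
      simp only [ContinuousLinearMap.add_apply, ContinuousLinearMap.smul_apply, smul_eq_mul]
      linarith
    have := hlow _ _ hc
    refine lt_of_lt_of_le ?_ this
    rw [EReal.coe_lt_coe_iff]
    simp only [ContinuousLinearMap.add_apply, ContinuousLinearMap.smul_apply, smul_eq_mul]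
    -- need r < ψ₀ x + l * y x - (c₀ + l * u)
    rcases le_or_gt ((r - ψ₀ x + c₀ + 1)/(y x - u)) 0 with hcase | hcase
    · have hl0 : l = 0 := max_eq_left hcase
      have : r - ψ₀ x + c₀ + 1 ≤ 0 := by
        by_contra hpos
        push_neg at hpos
        have := div_pos hpos hyxu
        linarith
      rw [hl0]; simp; linarith
    · have hl0 : l = (r - ψ₀ x + c₀ + 1)/(y x - u) := max_eq_right hcase.le
      have : l * (y x - u) = r - ψ₀ x + c₀ + 1 := by
        rw [hl0]; field_simp
      nlinarith

end Aux


/-- biduality `f** = f` for a closed proper convex function on a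
finite-dimensional real vector space, via the canonical map `V → V**`. -/
theorem legendre_legendre
    {V : Type*} [NormedAddCommGroup V] [NormedSpace ℝ V] [FiniteDimensional ℝ V]
    (f : V → EReal) (hf : ClosedProperConvexOn f) (x : V) :
    legendre (legendre f) (inclusionInDoubleDual ℝ V x) = f x := by
  have hbot := hf.1
  have hgbot : ∀ ψ : StrongDual ℝ V, legendre f ψ ≠ ⊥ := by
    intro ψ hψ
    obtain ⟨⟨z₀, t₀⟩, hz₀⟩ := hf.2.2.2
    have hz₀top : f z₀ ≠ ⊤ := fun h => by simp [epigraph, h] at hz₀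
    have := le_legendre f hbot ψ hz₀top
    rw [hψ] at this
    exact (EReal.bot_lt_coe _).not_ge this
  refine le_antisymm ?_ ?_
  · -- f** ≤ f
    rw [legendre, iSup_le_iff]
    rintro ⟨ψ, hψ⟩
    show ((inclusionInDoubleDual ℝ V x) ψ : EReal) - legendre f ψ ≤ f x
    rcases eq_or_ne (f x) ⊤ with hx | hx
    · rw [hx]; exact le_top
    · have h1 : ψ x - (f x).toReal ≤ (legendre f ψ).toReal := by
        rw [← EReal.coe_le_coe_iff, EReal.coe_toReal hψ (hgbot ψ)]
        exact le_legendre f hbot ψ hx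
      rw [show ((inclusionInDoubleDual ℝ V x) ψ : ℝ) = ψ x from rfl,
        ← EReal.coe_toReal hψ (hgbot ψ), ← EReal.coe_toReal hx (hbot x),
        ← EReal.coe_sub, EReal.coe_le_coe_iff]
      linarith
  · -- f ≤ f**
    by_contra hlt
    push_neg at hlt
    -- f** x is not ⊥ and not ⊤ (since < f x ≤ ⊤... f** < f x so ≠ ⊤ unless f x = ⊤... careful)
    have hne_top : legendre (legendre f) (inclusionInDoubleDual ℝ V x) ≠ ⊤ :=
      fun h => by rw [h] at hlt; exact (le_top).not_gt hlt
    have hne_bot : legendre (legendre f) (inclusionInDoubleDual ℝ V x) ≠ ⊥ := by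
      obtain ⟨ψ₀, c₀, hψ₀⟩ := exists_finite f hf
      have hψ₀top : legendre f ψ₀ ≠ ⊤ := fun h => by
        rw [h] at hψ₀; exact (EReal.coe_lt_top c₀).not_ge hψ₀
      intro h
      have := le_legendre (legendre f) hgbot (inclusionInDoubleDual ℝ V x) hψ₀top
      rw [h] at this
      exact (EReal.bot_lt_coe _).not_ge this
    set r : ℝ := (legendre (legendre f) (inclusionInDoubleDual ℝ V x)).toReal with hrdef
    have hreq : ((r : ℝ) : EReal) = legendre (legendre f) (inclusionInDoubleDual ℝ V x) :=
      EReal.coe_toReal hne_top hne_bot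
    have hxr : (x, r) ∉ epigraph f := by
      intro h
      have : f x ≤ (r : EReal) := h
      rw [hreq] at this
      exact this.not_gt hlt
    have := key f hf x r hxr
    rw [hreq] at this
    exact this.false
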